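/- Let k be a field, Q a finite acyclic quiver, and X, X' finitely generated kQ-modules. With η as the construction sending X (with minimal projective resolution 0 → P^{-1} →^d P^0 → X → 0) to the kQ[ε]-module P^{-1} ⊕ P^0 with ε = (0, d), there is an isomorphism of k-vector spaces: the stable Hom-space Hom_{kQ[ε]}(η(X), η(X')) modulo maps factoring through projective kQ[ε]-modules is isomorphic to Hom_{kQ}(X, X') ⊕ Ext¹_{kQ}(X, X'). -/

import Mathlib

/-!
STATEMENT 16: Let `k` be a field, `Q` a finite acyclic quiver, `X, X'` finitely
generated `kQ`-modules with minimal projective resolutions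
`0 → P⁻¹ →^d P⁰ → X → 0` and `0 → P'⁻¹ →^{d'} P'⁰ → X' → 0`, and let
`η(X) = P⁻¹ ⊕ P⁰` with `ε(p₋₁, p₀) = (0, d p₋₁)` (similarly `η(X')`).  Then
there is an isomorphism of `k`-vector spaces
`Hom_{kQ[ε]}(η(X), η(X'))/(maps factoring through projectives)
  ≅ Hom_{kQ}(X, X') ⊕ Ext¹_{kQ}(X, X')`.

Mathlib has no path algebras, so `kQ` is represented by a finite-dimensional
hereditary `k`-algebra `R`.  `kQ[ε]`-modules are `R`-modules with a square-zero
`R`-endomorphism; morphisms are commuting `R`-linear maps; since `η(X)` is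
finitely generated, factoring through a projective `kQ[ε]`-module is the same
as factoring through some finite free module `A^n`, `A = R[ε] = R × Rε` with
`ε·(a,b) = (0,a)`.  `Ext¹_{kQ}(X, X')` is computed from the given projective
resolution of `X` as `Hom(P⁻¹, X') / Im (Hom(P⁰, X') → Hom(P⁻¹, X'))`, and
minimality is expressed by the image of the differential being superfluous.
-/

section

variable {R : Type*} [Ring R]

/-- The square-zero endomorphism `(p₋₁, p₀) ↦ (0, d p₋₁)` of `P⁻¹ ⊕ P⁰`
defining `η(X)`. -/
def εeta {P₁ P₀ : Type*} [AddCommGroup P₁] [Module R P₁]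
    [AddCommGroup P₀] [Module R P₀] (d : P₁ →ₗ[R] P₀) :
    (P₁ × P₀) →ₗ[R] (P₁ × P₀) :=
  LinearMap.prod 0 (d.comp (LinearMap.fst R P₁ P₀))

/-- `ε` acting on the free module `A^n`, `A = R[ε] = R × Rε`. -/
def εfree (R : Type*) [Ring R] (n : ℕ) :
    (Fin n → R × R) →ₗ[R] (Fin n → R × R) :=
  LinearMap.pi fun j =>
    (LinearMap.prod 0 (LinearMap.fst R R R)).comp (LinearMap.proj j)

/-- A morphism of `R[ε]`-modules factors through a (finitely generated free,
equivalently, since its source is finitely generated, any projective)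
`R[ε]`-module. -/
def FactorsThroughProj {Y Y' : Type*} [AddCommGroup Y] [Module R Y]
    [AddCommGroup Y'] [Module R Y'] (ε : Y →ₗ[R] Y) (ε' : Y' →ₗ[R] Y')
    (f : Y →ₗ[R] Y') : Prop :=
  ∃ (n : ℕ) (u : Y →ₗ[R] (Fin n → R × R)) (v : (Fin n → R × R) →ₗ[R] Y'),
    u.comp ε = (εfree R n).comp u ∧ v.comp (εfree R n) = ε'.comp v ∧
    v.comp u = f

end

section

variable (k : Type*) [Field k] (R : Type*) [Ring R] [Algebra k R]
  {Y Y' : Type*} [AddCommGroup Y] [Module R Y] [Module k Y] [IsScalarTower k R Y]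
  [AddCommGroup Y'] [Module R Y'] [Module k Y'] [IsScalarTower k R Y']

/-- The `k`-subspace of `Hom_R(Y, Y')` of maps commuting with the `ε`'s,
i.e. `Hom_{R[ε]}((Y,ε), (Y',ε'))`. -/
def commSub (ε : Y →ₗ[R] Y) (ε' : Y' →ₗ[R] Y') : Submodule k (Y →ₗ[R] Y') where
  carrier := {f | f.comp ε = ε'.comp f}
  add_mem' := by
    intro f g hf hg
    simp only [Set.mem_setOf_eq, LinearMap.add_comp, LinearMap.comp_add] at *
    rw [hf, hg]
  zero_mem' := by simp
  smul_mem' := by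
    intro c f hf
    simp only [Set.mem_setOf_eq, LinearMap.smul_comp, LinearMap.comp_smul] at *
    rw [hf]

variable {R} in
/-- The stable Hom space: `Hom_{R[ε]}` modulo maps factoring through
projective `R[ε]`-modules. -/
def StableHom (ε : Y →ₗ[R] Y) (ε' : Y' →ₗ[R] Y') : Type _ :=
  ↥(commSub k R ε ε') ⧸ Submodule.span k
    {f : ↥(commSub k R ε ε') | FactorsThroughProj ε ε' (f : Y →ₗ[R] Y')}

variable {R} in
noncomputable instance (ε : Y →ₗ[R] Y) (ε' : Y' →ₗ[R] Y') :
    AddCommGroup (StableHom k ε ε') :=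
  inferInstanceAs (AddCommGroup (↥(commSub k R ε ε') ⧸ Submodule.span k
    {f : ↥(commSub k R ε ε') | FactorsThroughProj ε ε' (f : Y →ₗ[R] Y')}))

variable {R} in
noncomputable instance (ε : Y →ₗ[R] Y) (ε' : Y' →ₗ[R] Y') :
    Module k (StableHom k ε ε') :=
  inferInstanceAs (Module k (↥(commSub k R ε ε') ⧸ Submodule.span k
    {f : ↥(commSub k R ε ε') | FactorsThroughProj ε ε' (f : Y →ₗ[R] Y')}))

end

-- ===== auxiliary development =====

section helpers

variable {R M N L : Type*} [Ring R] [AddCommGroup M] [Module R M]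
  [AddCommGroup N] [Module R N] [AddCommGroup L] [Module R L]

noncomputable def descend (π : M →ₗ[R] N) (hπ : Function.Surjective π) (g : M →ₗ[R] L)
    (hg : LinearMap.ker π ≤ LinearMap.ker g) : N →ₗ[R] L :=
  (Submodule.liftQ (LinearMap.ker π) g hg).comp
    (π.quotKerEquivOfSurjective hπ).symm.toLinearMap

lemma descend_comp (π : M →ₗ[R] N) (hπ : Function.Surjective π) (g : M →ₗ[R] L)
    (hg : LinearMap.ker π ≤ LinearMap.ker g) : (descend π hπ g hg).comp π = g := by
  ext m
  have h1 : (π.quotKerEquivOfSurjective hπ) (Submodule.Quotient.mk m) = π m := rfl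
  have h2 : (π.quotKerEquivOfSurjective hπ).symm (π m) = Submodule.Quotient.mk m :=
    (LinearEquiv.symm_apply_eq _).mpr h1.symm
  simp [descend, h2]

lemma descend_unique (π : M →ₗ[R] N) (hπ : Function.Surjective π) (g : M →ₗ[R] L)
    (hg : LinearMap.ker π ≤ LinearMap.ker g) (h : N →ₗ[R] L)
    (hh : h.comp π = g) : h = descend π hπ g hg := by
  ext x
  obtain ⟨m, rfl⟩ := hπ x
  have := descend_comp π hπ g hg
  calc h (π m) = g m := DFunLike.congr_fun hh m
  _ = (descend π hπ g hg) (π m) := (DFunLike.congr_fun this m).symm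

noncomputable def invFactor (d' : M →ₗ[R] N) (hd' : Function.Injective d') (g : L →ₗ[R] N)
    (hg : ∀ z, g z ∈ LinearMap.range d') : L →ₗ[R] M :=
  ((LinearEquiv.ofInjective d' hd').symm.toLinearMap).comp
    (g.codRestrict (LinearMap.range d') hg)

lemma invFactor_comp (d' : M →ₗ[R] N) (hd' : Function.Injective d') (g : L →ₗ[R] N)
    (hg : ∀ z, g z ∈ LinearMap.range d') : d'.comp (invFactor d' hd' g hg) = g := by
  ext z
  have h1 : (LinearEquiv.ofInjective d' hd')
      ((LinearEquiv.ofInjective d' hd').symm ⟨g z, hg z⟩) = ⟨g z, hg z⟩ :=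
    LinearEquiv.apply_symm_apply _ _
  have h2 := congrArg Subtype.val h1
  rw [LinearEquiv.ofInjective_apply] at h2
  simpa [invFactor] using h2

end helpers

section homotopy

variable {R Y Y' : Type*} [Ring R] [AddCommGroup Y] [Module R Y]
  [AddCommGroup Y'] [Module R Y']

lemma homotopy_of_factorsThroughProj (ε : Y →ₗ[R] Y) (ε' : Y' →ₗ[R] Y')
    (f : Y →ₗ[R] Y') (h : FactorsThroughProj ε ε' f) :
    ∃ a : Y →ₗ[R] Y', f = ε'.comp a + a.comp ε := by
  obtain ⟨n, u, v, hu, hv, hvu⟩ := h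
  set a : Y →ₗ[R] Y' := v.comp (LinearMap.pi fun j => (LinearMap.inl R R R).comp
    ((LinearMap.snd R R R).comp ((LinearMap.proj j).comp u))) with hA
  refine ⟨a, ?_⟩
  ext y
  have h1 : u (ε y) = fun j => ((0 : R), (u y j).1) := DFunLike.congr_fun hu y
  have h2 : ∀ w, v (εfree R n w) = ε' (v w) := fun w => DFunLike.congr_fun hv w
  have e1 : ε' (a y) = v (fun j => ((0:R), (u y j).2)) := by
    rw [hA, LinearMap.comp_apply, ← h2]
    congr 1
  have e2 : a (ε y) = v (fun j => ((u y j).1, (0:R))) := by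
    show v (fun j => ((u (ε y) j).2, (0:R))) = _
    congr 1
    funext j
    rw [congrFun h1 j]
  have hdec : u y = (fun j => ((u y j).1, (0:R))) + fun j => ((0:R), (u y j).2) := by
    funext j; simp
  calc f y = v (u y) := (DFunLike.congr_fun hvu y).symm
    _ = v (fun j => ((u y j).1, (0:R))) + v (fun j => ((0:R), (u y j).2)) := by
        conv_lhs => rw [hdec]
        exact map_add v _ _
    _ = ε' (a y) + a (ε y) := by rw [e1, e2]; exact add_comm _ _
    _ = (ε'.comp a + a.comp ε) y := rfl

lemma factorsThroughProj_of_homotopy [Module.Finite R Y] [Module.Projective R Y]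
    (ε : Y →ₗ[R] Y) (ε' : Y' →ₗ[R] Y') (hε : ε.comp ε = 0) (hε' : ε'.comp ε' = 0)
    (a : Y →ₗ[R] Y') :
    FactorsThroughProj ε ε' (ε'.comp a + a.comp ε) := by
  obtain ⟨n, q, hq⟩ := Module.Finite.exists_fin' R Y
  obtain ⟨i, hi⟩ := Module.projective_lifting_property q LinearMap.id hq
  set u : Y →ₗ[R] (Fin n → R × R) := LinearMap.pi fun j =>
    (((LinearMap.proj j).comp (i.comp ε)).prod ((LinearMap.proj j).comp i)) with hU
  set c₁ : (Fin n → R × R) →ₗ[R] (Fin n → R) :=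
    LinearMap.pi fun j => (LinearMap.fst R R R).comp (LinearMap.proj j) with hC1
  set c₂ : (Fin n → R × R) →ₗ[R] (Fin n → R) :=
    LinearMap.pi fun j => (LinearMap.snd R R R).comp (LinearMap.proj j) with hC2
  set v : (Fin n → R × R) →ₗ[R] Y' :=
    (a.comp q).comp c₁ + (ε'.comp (a.comp q)).comp c₂ with hV
  have hiq : ∀ z : Y, q (i z) = z := fun z => DFunLike.congr_fun hi z
  have hεε : ∀ z : Y, ε (ε z) = 0 := fun z => DFunLike.congr_fun hε z
  have hε'ε' : ∀ w : Y', ε' (ε' w) = 0 := fun w => DFunLike.congr_fun hε' w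
  have hu_apply : ∀ z j, u z j = (i (ε z) j, i z j) := fun z j => rfl
  have hv_apply : ∀ w, v w = a (q (fun j => (w j).1)) + ε' (a (q (fun j => (w j).2))) :=
    fun w => rfl
  refine ⟨n, u, v, ?_, ?_, ?_⟩
  · ext z j
    · show i (ε (ε z)) j = (0 : R)
      rw [hεε z]; simp
    · show i (ε z) j = (u z j).1
      rw [hu_apply]
  · refine LinearMap.ext fun w => ?_
    rw [LinearMap.comp_apply, LinearMap.comp_apply, hv_apply, hv_apply]
    have h1 : (fun j => ((εfree R n w) j).1) = (0 : Fin n → R) := by funext j; rfl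
    have h2 : (fun j => ((εfree R n w) j).2) = fun j => (w j).1 := by funext j; rfl
    rw [h1, h2, map_zero, map_zero, zero_add, map_add, hε'ε', add_zero]
  · ext z
    rw [LinearMap.comp_apply, hv_apply]
    have h1 : (fun j => ((u z) j).1) = i (ε z) := by funext j; rfl
    have h2 : (fun j => ((u z) j).2) = i z := by funext j; rfl
    rw [h1, h2, hiq, hiq]
    show a (ε z) + ε' (a z) = ε' (a z) + a (ε z)
    exact add_comm _ _

end homotopy

section components

variable {R P₁ P₀ P₁' P₀' : Type*} [Ring R]
  [AddCommGroup P₁] [Module R P₁] [AddCommGroup P₀] [Module R P₀]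
  [AddCommGroup P₁'] [Module R P₁'] [AddCommGroup P₀'] [Module R P₀']

def Acomp (f : (P₁ × P₀) →ₗ[R] (P₁' × P₀')) : P₁ →ₗ[R] P₁' :=
  (LinearMap.fst R P₁' P₀').comp (f.comp (LinearMap.inl R P₁ P₀))

def Bcomp (f : (P₁ × P₀) →ₗ[R] (P₁' × P₀')) : P₀ →ₗ[R] P₁' :=
  (LinearMap.fst R P₁' P₀').comp (f.comp (LinearMap.inr R P₁ P₀))

def Ccomp (f : (P₁ × P₀) →ₗ[R] (P₁' × P₀')) : P₁ →ₗ[R] P₀' :=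
  (LinearMap.snd R P₁' P₀').comp (f.comp (LinearMap.inl R P₁ P₀))

def Ecomp (f : (P₁ × P₀) →ₗ[R] (P₁' × P₀')) : P₀ →ₗ[R] P₀' :=
  (LinearMap.snd R P₁' P₀').comp (f.comp (LinearMap.inr R P₁ P₀))

lemma Acomp_apply (f : (P₁ × P₀) →ₗ[R] (P₁' × P₀')) (p : P₁) :
    Acomp f p = (f (p, 0)).1 := rfl

lemma Bcomp_apply (f : (P₁ × P₀) →ₗ[R] (P₁' × P₀')) (p : P₀) :
    Bcomp f p = (f (0, p)).1 := rfl

lemma Ccomp_apply (f : (P₁ × P₀) →ₗ[R] (P₁' × P₀')) (p : P₁) :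
    Ccomp f p = (f (p, 0)).2 := rfl

lemma Ecomp_apply (f : (P₁ × P₀) →ₗ[R] (P₁' × P₀')) (p : P₀) :
    Ecomp f p = (f (0, p)).2 := rfl

lemma εeta_apply (d : P₁ →ₗ[R] P₀) (p : P₁ × P₀) : εeta d p = (0, d p.1) := rfl

lemma εeta_sq (d : P₁ →ₗ[R] P₀) : (εeta d).comp (εeta d) = 0 := by
  refine LinearMap.ext fun p => ?_
  rw [LinearMap.comp_apply, εeta_apply, εeta_apply]
  simp

lemma f_decomp (f : (P₁ × P₀) →ₗ[R] (P₁' × P₀')) (p : P₁ × P₀) :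
    f p = (Acomp f p.1 + Bcomp f p.2, Ccomp f p.1 + Ecomp f p.2) := by
  have h : ((p.1, (0:P₀)) : P₁ × P₀) + ((0:P₁), p.2) = p := by simp
  conv_lhs => rw [← h, map_add]
  rfl

variable (d : P₁ →ₗ[R] P₀) (d' : P₁' →ₗ[R] P₀')

lemma comm_B {f : (P₁ × P₀) →ₗ[R] (P₁' × P₀')} (hd' : Function.Injective d')
    (hf : f.comp (εeta d) = (εeta d').comp f) : Bcomp f = 0 := by
  ext p₀
  apply hd'
  have h := DFunLike.congr_fun hf ((0 : P₁), p₀)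
  have hL : f (εeta d (0, p₀)) = 0 := by
    rw [εeta_apply]
    simp
    exact map_zero f
  rw [LinearMap.comp_apply, LinearMap.comp_apply, hL] at h
  have h2 := congrArg Prod.snd h
  rw [εeta_apply] at h2
  simpa [Bcomp_apply] using h2.symm

lemma comm_AE {f : (P₁ × P₀) →ₗ[R] (P₁' × P₀')}
    (hf : f.comp (εeta d) = (εeta d').comp f) :
    (Ecomp f).comp d = d'.comp (Acomp f) := by
  ext p₁
  have h := DFunLike.congr_fun hf (p₁, (0 : P₀))
  rw [LinearMap.comp_apply, LinearMap.comp_apply, εeta_apply, εeta_apply] at h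
  have h2 := congrArg Prod.snd h
  simpa [Ecomp_apply, Acomp_apply] using h2

end components

section phi

variable {k : Type*} [Field k] {R : Type*} [Ring R] [Algebra k R]
variable {X X' P₁ P₀ P₁' P₀' : Type*}
  [AddCommGroup X] [Module R X] [Module k X] [IsScalarTower k R X]
  [AddCommGroup X'] [Module R X'] [Module k X'] [IsScalarTower k R X']
  [AddCommGroup P₁] [Module R P₁] [Module k P₁] [IsScalarTower k R P₁]
  [AddCommGroup P₀] [Module R P₀] [Module k P₀] [IsScalarTower k R P₀]
  [AddCommGroup P₁'] [Module R P₁'] [Module k P₁'] [IsScalarTower k R P₁']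
  [AddCommGroup P₀'] [Module R P₀'] [Module k P₀'] [IsScalarTower k R P₀']
variable (d : P₁ →ₗ[R] P₀) (π : P₀ →ₗ[R] X) (d' : P₁' →ₗ[R] P₀') (π' : P₀' →ₗ[R] X')

lemma mem_commSub {f : (P₁ × P₀) →ₗ[R] (P₁' × P₀')} :
    f ∈ commSub k R (εeta d) (εeta d') ↔
      f.comp (εeta d) = (εeta d').comp f := Iff.rfl

lemma Ecomp_add (f g : (P₁ × P₀) →ₗ[R] (P₁' × P₀')) :
    Ecomp (f + g) = Ecomp f + Ecomp g := by
  unfold Ecomp; rw [LinearMap.add_comp, LinearMap.comp_add]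

lemma Ccomp_add (f g : (P₁ × P₀) →ₗ[R] (P₁' × P₀')) :
    Ccomp (f + g) = Ccomp f + Ccomp g := by
  unfold Ccomp; rw [LinearMap.add_comp, LinearMap.comp_add]

lemma Ecomp_smul (c : k) (f : (P₁ × P₀) →ₗ[R] (P₁' × P₀')) :
    Ecomp (c • f) = c • Ecomp f := by
  ext p
  simp [Ecomp_apply]

lemma Ccomp_smul (c : k) (f : (P₁ × P₀) →ₗ[R] (P₁' × P₀')) :
    Ccomp (c • f) = c • Ccomp f := by
  ext p
  simp [Ccomp_apply]

lemma kerpi_le (hexact : LinearMap.range d = LinearMap.ker π)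
    (hexact' : LinearMap.range d' = LinearMap.ker π')
    {f : (P₁ × P₀) →ₗ[R] (P₁' × P₀')} (hf : f.comp (εeta d) = (εeta d').comp f) :
    LinearMap.ker π ≤ LinearMap.ker (π'.comp (Ecomp f)) := by
  intro x hx
  rw [← hexact] at hx
  obtain ⟨p, rfl⟩ := hx
  rw [LinearMap.mem_ker, LinearMap.comp_apply]
  have h1 : Ecomp f (d p) = d' (Acomp f p) := DFunLike.congr_fun (comm_AE d d' hf) p
  rw [h1]
  have h2 : d' (Acomp f p) ∈ LinearMap.ker π' := hexact' ▸ LinearMap.mem_range_self _ _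
  exact h2

variable (k) in
/-- First component of the comparison map. -/
noncomputable def phi1 (hπ : Function.Surjective π)
    (hexact : LinearMap.range d = LinearMap.ker π)
    (hexact' : LinearMap.range d' = LinearMap.ker π') :
    ↥(commSub k R (εeta d) (εeta d')) →ₗ[k] (X →ₗ[R] X') where
  toFun f := descend π hπ (π'.comp (Ecomp f.1))
      (kerpi_le d π d' π' hexact hexact' ((mem_commSub d d').mp f.2))
  map_add' f g := by
    refine (descend_unique π hπ _ _ _ ?_).symm
    rw [LinearMap.add_comp, descend_comp, descend_comp, ← LinearMap.comp_add, ← Ecomp_add]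
    rfl
  map_smul' c f := by
    simp only [RingHom.id_apply]
    refine (descend_unique π hπ _ _ _ ?_).symm
    rw [LinearMap.smul_comp, descend_comp]
    have : Ecomp ((c • f).1 : (P₁ × P₀) →ₗ[R] (P₁' × P₀')) = c • Ecomp f.1 :=
      Ecomp_smul c f.1
    rw [this]
    ext p
    simp

lemma phi1_comp (hπ : Function.Surjective π)
    (hexact : LinearMap.range d = LinearMap.ker π)
    (hexact' : LinearMap.range d' = LinearMap.ker π')
    (f : ↥(commSub k R (εeta d) (εeta d'))) :
    (phi1 k d π d' π' hπ hexact hexact' f).comp π = π'.comp (Ecomp f.1) :=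
  descend_comp _ _ _ _

lemma phi1_unique (hπ : Function.Surjective π)
    (hexact : LinearMap.range d = LinearMap.ker π)
    (hexact' : LinearMap.range d' = LinearMap.ker π')
    (f : ↥(commSub k R (εeta d) (εeta d'))) (g : X →ₗ[R] X')
    (hg : g.comp π = π'.comp (Ecomp f.1)) :
    g = phi1 k d π d' π' hπ hexact hexact' f :=
  descend_unique _ _ _ _ _ hg

variable (k) in
/-- Second component of the comparison map. -/
noncomputable def phi2 (dstar : (P₀ →ₗ[R] X') →ₗ[k] (P₁ →ₗ[R] X')) :
    ↥(commSub k R (εeta d) (εeta d')) →ₗ[k]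
      ((P₁ →ₗ[R] X') ⧸ LinearMap.range dstar) where
  toFun f := Submodule.Quotient.mk (π'.comp (Ccomp f.1))
  map_add' f g := by
    have h : π'.comp (Ccomp ((f + g).1 : (P₁ × P₀) →ₗ[R] (P₁' × P₀'))) =
        π'.comp (Ccomp f.1) + π'.comp (Ccomp g.1) := by
      rw [show ((f + g).1 : (P₁ × P₀) →ₗ[R] (P₁' × P₀')) = f.1 + g.1 from rfl,
        Ccomp_add, LinearMap.comp_add]
    rw [h, Submodule.Quotient.mk_add]
  map_smul' c f := by
    have h : π'.comp (Ccomp ((c • f).1 : (P₁ × P₀) →ₗ[R] (P₁' × P₀'))) =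
        c • (π'.comp (Ccomp f.1)) := by
      rw [show ((c • f).1 : (P₁ × P₀) →ₗ[R] (P₁' × P₀')) = c • f.1 from rfl,
        Ccomp_smul]
      ext p
      simp
    rw [h, Submodule.Quotient.mk_smul]
    rfl

variable (k) in
noncomputable def phi (hπ : Function.Surjective π)
    (hexact : LinearMap.range d = LinearMap.ker π)
    (hexact' : LinearMap.range d' = LinearMap.ker π')
    (dstar : (P₀ →ₗ[R] X') →ₗ[k] (P₁ →ₗ[R] X')) :
    ↥(commSub k R (εeta d) (εeta d')) →ₗ[k]
      (X →ₗ[R] X') × ((P₁ →ₗ[R] X') ⧸ LinearMap.range dstar) :=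
  (phi1 k d π d' π' hπ hexact hexact').prod (phi2 k d d' π' dstar)

lemma phi_surjective (hπ : Function.Surjective π)
    (hexact : LinearMap.range d = LinearMap.ker π)
    (hexact' : LinearMap.range d' = LinearMap.ker π')
    (dstar : (P₀ →ₗ[R] X') →ₗ[k] (P₁ →ₗ[R] X'))
    (hd' : Function.Injective d') (hπ' : Function.Surjective π')
    [Module.Projective R P₀] [Module.Projective R P₁] :
    Function.Surjective (phi k d π d' π' hπ hexact hexact' dstar) := by
  rintro ⟨g, ξ⟩
  obtain ⟨h, rfl⟩ := Submodule.Quotient.mk_surjective _ ξ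
  obtain ⟨e, he⟩ := Module.projective_lifting_property π' (g.comp π) hπ'
  have hrange : ∀ p, (e.comp d) p ∈ LinearMap.range d' := by
    intro p
    rw [hexact', LinearMap.mem_ker, LinearMap.comp_apply]
    have h1 : π' (e (d p)) = g (π (d p)) := DFunLike.congr_fun he (d p)
    have h2 : d p ∈ LinearMap.ker π := hexact ▸ LinearMap.mem_range_self _ _
    rw [LinearMap.mem_ker] at h2
    rw [h1, h2, map_zero]
  set aa := invFactor d' hd' (e.comp d) hrange with haadef
  have haa : d'.comp aa = e.comp d := invFactor_comp d' hd' (e.comp d) hrange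
  obtain ⟨c, hc⟩ := Module.projective_lifting_property π' h hπ'
  set F : (P₁ × P₀) →ₗ[R] (P₁' × P₀') := (aa.comp (LinearMap.fst R P₁ P₀)).prod
    ((c.comp (LinearMap.fst R P₁ P₀)) + (e.comp (LinearMap.snd R P₁ P₀))) with hF
  have hFapp : ∀ p : P₁ × P₀, F p = (aa p.1, c p.1 + e p.2) := fun p => rfl
  have hFmem : F ∈ commSub k R (εeta d) (εeta d') := by
    rw [mem_commSub]
    refine LinearMap.ext fun p => ?_
    rw [LinearMap.comp_apply, LinearMap.comp_apply, εeta_apply, hFapp, hFapp, εeta_apply]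
    have h1 : aa (0 : P₁) = 0 := map_zero _
    have h2 : c (0 : P₁) = 0 := map_zero _
    have h3 : e (d p.1) = d' (aa p.1) := (DFunLike.congr_fun haa p.1).symm
    simp only [h1, h2, zero_add]
    exact Prod.ext rfl h3
  have hE : Ecomp F = e := by
    ext p₀
    rw [Ecomp_apply, hFapp]
    simp
  have hC : Ccomp F = c := by
    ext p₁
    rw [Ccomp_apply, hFapp]
    simp
  refine ⟨⟨F, hFmem⟩, ?_⟩
  refine Prod.ext ?_ ?_
  · show phi1 k d π d' π' hπ hexact hexact' ⟨F, hFmem⟩ = g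
    refine (phi1_unique d π d' π' hπ hexact hexact' ⟨F, hFmem⟩ g ?_).symm
    show g.comp π = π'.comp (Ecomp F)
    rw [hE, he]
  · show Submodule.Quotient.mk (π'.comp (Ccomp F)) = Submodule.Quotient.mk h
    rw [hC, hc]

lemma phi_eq_zero_iff (hπ : Function.Surjective π)
    (hexact : LinearMap.range d = LinearMap.ker π)
    (hexact' : LinearMap.range d' = LinearMap.ker π')
    (dstar : (P₀ →ₗ[R] X') →ₗ[k] (P₁ →ₗ[R] X'))
    (hdstar : ∀ h : P₀ →ₗ[R] X', dstar h = h.comp d)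
    (hd' : Function.Injective d') (hπ' : Function.Surjective π')
    [Module.Projective R P₀]
    (f : ↥(commSub k R (εeta d) (εeta d'))) :
    phi k d π d' π' hπ hexact hexact' dstar f = 0 ↔
      ∃ a : (P₁ × P₀) →ₗ[R] (P₁' × P₀'),
        (f : (P₁ × P₀) →ₗ[R] (P₁' × P₀')) = (εeta d').comp a + a.comp (εeta d) := by
  have hπ'd' : ∀ z, π' (d' z) = 0 := by
    intro z
    have : d' z ∈ LinearMap.ker π' := hexact' ▸ LinearMap.mem_range_self _ _
    exact this
  constructor
  · intro h0
    have h1 : phi1 k d π d' π' hπ hexact hexact' f = 0 := congrArg Prod.fst h0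
    have h2 : (Submodule.Quotient.mk (π'.comp (Ccomp f.1)) :
        (P₁ →ₗ[R] X') ⧸ LinearMap.range dstar) = 0 := congrArg Prod.snd h0
    -- E component kills π'
    have hE0 : π'.comp (Ecomp f.1) = 0 := by
      rw [← phi1_comp d π d' π' hπ hexact hexact' f, h1, LinearMap.zero_comp]
    have hErange : ∀ p₀, Ecomp f.1 p₀ ∈ LinearMap.range d' := by
      intro p₀
      rw [hexact', LinearMap.mem_ker]
      exact DFunLike.congr_fun hE0 p₀
    set s := invFactor d' hd' (Ecomp f.1) hErange with hsdef
    have hs : d'.comp s = Ecomp f.1 := invFactor_comp _ _ _ _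
    -- C component
    rw [Submodule.Quotient.mk_eq_zero, LinearMap.mem_range] at h2
    obtain ⟨t, ht⟩ := h2
    rw [hdstar] at ht
    obtain ⟨t', ht'⟩ := Module.projective_lifting_property π' t hπ'
    have hCrange : ∀ p₁, (Ccomp f.1 - t'.comp d) p₁ ∈ LinearMap.range d' := by
      intro p₁
      rw [hexact', LinearMap.mem_ker]
      have e1 : π' (Ccomp f.1 p₁) = t (d p₁) := (DFunLike.congr_fun ht p₁).symm
      have e2 : π' (t' (d p₁)) = t (d p₁) := DFunLike.congr_fun ht' (d p₁)
      rw [LinearMap.sub_apply, map_sub, e1, LinearMap.comp_apply, e2, sub_self]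
    set r := invFactor d' hd' (Ccomp f.1 - t'.comp d) hCrange with hrdef
    have hr : d'.comp r = Ccomp f.1 - t'.comp d := invFactor_comp _ _ _ _
    have hB : Bcomp f.1 = 0 := comm_B d d' hd' ((mem_commSub d d').mp f.2)
    have hA : Acomp f.1 = s.comp d := by
      refine LinearMap.ext fun p => hd' ?_
      have e1 : Ecomp f.1 (d p) = d' (Acomp f.1 p) :=
        DFunLike.congr_fun (comm_AE d d' ((mem_commSub d d').mp f.2)) p
      have e2 : d' (s (d p)) = Ecomp f.1 (d p) := DFunLike.congr_fun hs (d p)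
      rw [← e1, ← e2]
      rfl
    have hAp : ∀ p₁ : P₁, Acomp f.1 p₁ = s (d p₁) := fun p₁ => DFunLike.congr_fun hA p₁
    have hBp : ∀ p₀ : P₀, Bcomp f.1 p₀ = 0 := fun p₀ => DFunLike.congr_fun hB p₀
    have hEp : ∀ p₀ : P₀, Ecomp f.1 p₀ = d' (s p₀) := fun p₀ => (DFunLike.congr_fun hs p₀).symm
    have hCp : ∀ p₁ : P₁, Ccomp f.1 p₁ = d' (r p₁) + t' (d p₁) := by
      intro p₁
      have h6 : d' (r p₁) = Ccomp f.1 p₁ - t' (d p₁) := DFunLike.congr_fun hr p₁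
      rw [eq_sub_iff_add_eq] at h6
      exact h6.symm
    set aA : (P₁ × P₀) →ₗ[R] (P₁' × P₀') :=
      ((r.comp (LinearMap.fst R P₁ P₀)) + (s.comp (LinearMap.snd R P₁ P₀))).prod
        (t'.comp (LinearMap.snd R P₁ P₀)) with haAdef
    have haApp : ∀ q : P₁ × P₀, aA q = (r q.1 + s q.2, t' q.2) := fun q => rfl
    refine ⟨aA, ?_⟩
    refine LinearMap.ext fun p => ?_
    rw [f_decomp f.1 p, LinearMap.add_apply, LinearMap.comp_apply, LinearMap.comp_apply,
      εeta_apply, εeta_apply, haApp, haApp]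
    refine Prod.ext ?_ ?_
    · show Acomp f.1 p.1 + Bcomp f.1 p.2 = _
      rw [hAp, hBp]
      show s (d p.1) + 0 = 0 + (r 0 + s (d p.1))
      rw [map_zero]
      abel
    · show Ccomp f.1 p.1 + Ecomp f.1 p.2 = _
      rw [hCp, hEp]
      show d' (r p.1) + t' (d p.1) + d' (s p.2) = d' (r p.1 + s p.2) + t' (d p.1)
      rw [map_add]
      abel
  · rintro ⟨a, ha⟩
    have hE0 : π'.comp (Ecomp f.1) = 0 := by
      refine LinearMap.ext fun p₀ => ?_
      have h1 : Ecomp f.1 p₀ = (((εeta d').comp a + a.comp (εeta d)) ((0 : P₁), p₀)).2 := by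
        rw [Ecomp_apply, ha]
      rw [LinearMap.comp_apply, h1]
      have h2 : (εeta d (((0 : P₁), p₀))) = 0 := by
        rw [εeta_apply]
        simp
      rw [LinearMap.add_apply, LinearMap.comp_apply, LinearMap.comp_apply, h2, map_zero,
        add_zero, εeta_apply]
      exact hπ'd' _
    refine Prod.ext ?_ ?_
    · show phi1 k d π d' π' hπ hexact hexact' f = 0
      refine (phi1_unique d π d' π' hπ hexact hexact' f 0 ?_).symm
      rw [LinearMap.zero_comp]
      exact hE0.symm
    · show (Submodule.Quotient.mk (π'.comp (Ccomp f.1)) :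
        (P₁ →ₗ[R] X') ⧸ LinearMap.range dstar) = 0
      rw [Submodule.Quotient.mk_eq_zero, LinearMap.mem_range]
      refine ⟨π'.comp ((LinearMap.snd R P₁' P₀').comp (a.comp (LinearMap.inr R P₁ P₀))), ?_⟩
      rw [hdstar]
      refine LinearMap.ext fun p₁ => ?_
      have h1 : Ccomp f.1 p₁ = (((εeta d').comp a + a.comp (εeta d)) ((p₁, (0 : P₀)))).2 := by
        rw [Ccomp_apply, ha]
      have h2 : (((εeta d').comp a + a.comp (εeta d)) ((p₁, (0 : P₀)))).2
          = d' ((a (p₁, 0)).1) + (a (0, d p₁)).2 := by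
        rw [LinearMap.add_apply, LinearMap.comp_apply, LinearMap.comp_apply, εeta_apply,
          εeta_apply]
        rfl
      show π' ((a ((0 : P₁), d p₁)).2) = π' (Ccomp f.1 p₁)
      rw [h1, h2, map_add, hπ'd', zero_add]

end phi


theorem stmt16 (k : Type*) [Field k] (R : Type*) [Ring R] [Algebra k R]
    [FiniteDimensional k R]
    (hhered : ∀ I : Submodule R R, Module.Projective R I)
    -- the two modules and their minimal projective resolutions
    (X X' : Type*) [AddCommGroup X] [Module R X] [Module k X] [IsScalarTower k R X]
    [AddCommGroup X'] [Module R X'] [Module k X'] [IsScalarTower k R X']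
    [Module.Finite R X] [Module.Finite R X']
    (P₁ P₀ P₁' P₀' : Type*)
    [AddCommGroup P₁] [Module R P₁] [Module k P₁] [IsScalarTower k R P₁]
    [AddCommGroup P₀] [Module R P₀] [Module k P₀] [IsScalarTower k R P₀]
    [AddCommGroup P₁'] [Module R P₁'] [Module k P₁'] [IsScalarTower k R P₁']
    [AddCommGroup P₀'] [Module R P₀'] [Module k P₀'] [IsScalarTower k R P₀']
    [Module.Finite R P₁] [Module.Projective R P₁]
    [Module.Finite R P₀] [Module.Projective R P₀]
    [Module.Finite R P₁'] [Module.Projective R P₁']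
    [Module.Finite R P₀'] [Module.Projective R P₀']
    (d : P₁ →ₗ[R] P₀) (π : P₀ →ₗ[R] X)
    (hd : Function.Injective d) (hπ : Function.Surjective π)
    (hexact : LinearMap.range d = LinearMap.ker π)
    (hmin : ∀ N : Submodule R P₀, N ⊔ LinearMap.range d = ⊤ → N = ⊤)
    (d' : P₁' →ₗ[R] P₀') (π' : P₀' →ₗ[R] X')
    (hd' : Function.Injective d') (hπ' : Function.Surjective π')
    (hexact' : LinearMap.range d' = LinearMap.ker π')
    (hmin' : ∀ N : Submodule R P₀', N ⊔ LinearMap.range d' = ⊤ → N = ⊤)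
    -- `Hom(P⁰, X') → Hom(P⁻¹, X')`, whose cokernel computes `Ext¹(X, X')`
    (dstar : (P₀ →ₗ[R] X') →ₗ[k] (P₁ →ₗ[R] X'))
    (hdstar : ∀ h : P₀ →ₗ[R] X', dstar h = h.comp d) :
    -- the stable Hom-space of `(η(X), η(X'))` is `k`-linearly isomorphic to
    -- `Hom_R(X,X') ⊕ Ext¹_R(X,X')`
    Nonempty ((StableHom k (εeta d) (εeta d'))
      ≃ₗ[k] ((X →ₗ[R] X') × ((P₁ →ₗ[R] X') ⧸ LinearMap.range dstar))) := by
  have hεsq := εeta_sq d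
  have hε'sq := εeta_sq d'
  set Φ := phi k d π d' π' hπ hexact hexact' dstar with hΦ
  have hsurj : Function.Surjective Φ :=
    phi_surjective d π d' π' hπ hexact hexact' dstar hd' hπ'
  have hker : Submodule.span k {f : ↥(commSub k R (εeta d) (εeta d')) |
      FactorsThroughProj (εeta d) (εeta d') (f : (P₁ × P₀) →ₗ[R] (P₁' × P₀'))} =
      LinearMap.ker Φ := by
    apply le_antisymm
    · rw [Submodule.span_le]
      intro f hf
      rw [SetLike.mem_coe, LinearMap.mem_ker]
      obtain ⟨a, ha⟩ := homotopy_of_factorsThroughProj _ _ _ hf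
      exact (phi_eq_zero_iff d π d' π' hπ hexact hexact' dstar hdstar hd' hπ' f).mpr ⟨a, ha⟩
    · intro f hf
      apply Submodule.subset_span
      rw [LinearMap.mem_ker] at hf
      obtain ⟨a, ha⟩ :=
        (phi_eq_zero_iff d π d' π' hπ hexact hexact' dstar hdstar hd' hπ' f).mp hf
      show FactorsThroughProj (εeta d) (εeta d') (f : (P₁ × P₀) →ₗ[R] (P₁' × P₀'))
      rw [ha]
      exact factorsThroughProj_of_homotopy _ _ hεsq hε'sq a
  exact ⟨(Submodule.quotEquivOfEq _ _ hker).trans (Φ.quotKerEquivOfSurjective hsurj)⟩
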